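/- If Σ is a compact immersed surface in ℝ⁴ whose principal angles with respect to a fixed plane Π are constant (independent of the point), then these constant principal angles are 0 and π/2. -/

import Mathlib

noncomputable section
open Real
open scoped Manifold RealInnerProductSpace

abbrev E4 := EuclideanSpace ℝ (Fin 4)

/-- `θ₁ ≤ θ₂` are the principal angles between the planes `V` and `W` of `ℝ⁴`:
`cos²θ₁`, `cos²θ₂` are the eigenvalues of the quadratic form `v ↦ ‖p_W v‖²` on `V`. -/
def IsPrincipalAngles (V W : Submodule ℝ E4) (θ₁ θ₂ : ℝ) : Prop :=
  0 ≤ θ₁ ∧ θ₁ ≤ θ₂ ∧ θ₂ ≤ π / 2 ∧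
  ∃ v₁ v₂ : E4, v₁ ∈ V ∧ v₂ ∈ V ∧ ‖v₁‖ = 1 ∧ ‖v₂‖ = 1 ∧ ⟪v₁, v₂⟫ = 0 ∧
    ∀ v ∈ V, ‖(W.orthogonalProjection v : E4)‖ ^ 2 =
      Real.cos θ₁ ^ 2 * ⟪v, v₁⟫ ^ 2 + Real.cos θ₂ ^ 2 * ⟪v, v₂⟫ ^ 2

/-- On a boundaryless manifold, the manifold derivative of a real function vanishes at a
local maximum. -/
theorem isLocalMax_mfderiv_eq_zero_aux
    {M : Type*} [TopologicalSpace M] [ChartedSpace (EuclideanSpace ℝ (Fin 2)) M]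
    (f : M → ℝ) (p : M) (h : IsLocalMax f p) :
    mfderiv (𝓡 2) 𝓘(ℝ, ℝ) f p = 0 := by
  classical
  by_cases hd : MDifferentiableAt (𝓡 2) 𝓘(ℝ, ℝ) f p
  · simp only [mfderiv, hd, ↓reduceIte]
    have hU : Set.range (𝓡 2) = Set.univ := ModelWithCorners.range_eq_univ _
    rw [hU, fderivWithin_univ]
    have hpt : (extChartAt (𝓡 2) p).symm ((extChartAt (𝓡 2) p) p) = p :=
      (extChartAt (𝓡 2) p).left_inv (mem_extChartAt_source p)
    have hc : ContinuousAt (extChartAt (𝓡 2) p).symm ((extChartAt (𝓡 2) p) p) :=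
      continuousAt_extChartAt_symm p
    have ht : Filter.Tendsto (extChartAt (𝓡 2) p).symm
        (nhds ((extChartAt (𝓡 2) p) p)) (nhds p) := by
      have := hc.tendsto
      rwa [hpt] at this
    have hev : ∀ᶠ y in nhds ((extChartAt (𝓡 2) p) p),
        f ((extChartAt (𝓡 2) p).symm y) ≤ f p := ht.eventually h
    have hmax : IsLocalMax (writtenInExtChartAt (𝓡 2) 𝓘(ℝ, ℝ) p f)
        ((extChartAt (𝓡 2) p) p) := by
      refine hev.mono fun y hy => ?_
      simpa [writtenInExtChartAt, hpt, chartAt_self_eq] using hy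
    exact hmax.fderiv_eq_zero
  · exact mfderiv_zero_of_not_mdifferentiableAt hd

/-- In a 2-dimensional subspace `T` with an orthonormal pair `v₁, v₂`, Parseval's identity
holds for every `v ∈ T`. -/
theorem parseval_two_dim_aux (T : Submodule ℝ E4) (hT : Module.finrank ℝ T = 2)
    {v₁ v₂ : E4} (hv₁T : v₁ ∈ T) (hv₂T : v₂ ∈ T) (hn₁ : ‖v₁‖ = 1) (hn₂ : ‖v₂‖ = 1)
    (ho : ⟪v₁, v₂⟫ = 0) {v : E4} (hv : v ∈ T) :
    ⟪v, v₁⟫ ^ 2 + ⟪v, v₂⟫ ^ 2 = ‖v‖ ^ 2 := by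
  classical
  have h11 : ⟪v₁, v₁⟫ = 1 := by
    rw [real_inner_self_eq_norm_sq, hn₁]; norm_num
  have h22 : ⟪v₂, v₂⟫ = 1 := by
    rw [real_inner_self_eq_norm_sq, hn₂]; norm_num
  have h21 : ⟪v₂, v₁⟫ = 0 := by rw [real_inner_comm]; exact ho
  have horth : Orthonormal ℝ (![v₁, v₂]) := by
    refine ⟨fun i => ?_, fun {i j} hij => ?_⟩
    · fin_cases i
      · exact hn₁
      · exact hn₂
    · fin_cases i <;> fin_cases j <;>
        first
          | exact absurd rfl hij
          | exact ho
          | exact h21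
  have hrange : Set.range (![v₁, v₂]) = {v₁, v₂} := by
    ext x
    simp only [Set.mem_range, Fin.exists_fin_two, Matrix.cons_val_zero, Matrix.cons_val_one,
      Matrix.head_cons, Set.mem_insert_iff, Set.mem_singleton_iff, eq_comm]
  have hspan : Submodule.span ℝ ({v₁, v₂} : Set E4) = T := by
    apply Submodule.eq_of_le_of_finrank_le
    · rw [Submodule.span_le]
      rintro x hx
      rcases hx with rfl | hx
      · exact hv₁T
      · rcases hx with rfl; exact hv₂T
    · rw [hT, ← hrange, finrank_span_eq_card horth.linearIndependent]
      simp
  have hvspan : v ∈ Submodule.span ℝ ({v₁, v₂} : Set E4) := hspan ▸ hv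
  obtain ⟨a, b, hab⟩ := Submodule.mem_span_pair.mp hvspan
  have ha : ⟪v, v₁⟫ = a := by
    rw [← hab, inner_add_left, real_inner_smul_left, real_inner_smul_left, h11, h21]
    ring
  have hb : ⟪v, v₂⟫ = b := by
    rw [← hab, inner_add_left, real_inner_smul_left, real_inner_smul_left, h22, ho]
    ring
  have hnorm : ‖v‖ ^ 2 = a ^ 2 + b ^ 2 := by
    rw [← real_inner_self_eq_norm_sq, ← hab, real_inner_add_add_self,
      real_inner_smul_left, real_inner_smul_left, real_inner_smul_left,
      real_inner_smul_right, real_inner_smul_right, real_inner_smul_right,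
      h11, h22, ho]
    ring
  rw [ha, hb, hnorm]

/-- If a nonzero `w ∈ W` is orthogonal to a 2-dimensional subspace `T`, and `W` is
2-dimensional, then `T` contains a unit vector whose orthogonal projection to `W`
vanishes. -/
theorem exists_unit_proj_zero_aux (T W : Submodule ℝ E4)
    (hT : Module.finrank ℝ T = 2) (hW : Module.finrank ℝ W = 2)
    {w : E4} (hw : w ∈ W) (hw0 : w ≠ 0) (horth : ∀ y ∈ T, ⟪w, y⟫ = 0) :
    ∃ v : E4, v ∈ T ∧ ‖v‖ = 1 ∧ (W.orthogonalProjection v : E4) = 0 := by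
  classical
  set g : W →ₗ[ℝ] ℝ := ((innerSL ℝ w).toLinearMap).comp W.subtype with hg
  set P : T →ₗ[ℝ] W := ((W.orthogonalProjection).toLinearMap).comp T.subtype with hP
  have hgw : g ⟨w, hw⟩ = ⟪w, w⟫ := rfl
  have hgne : g ⟨w, hw⟩ ≠ 0 := by
    rw [hgw]
    exact inner_self_ne_zero.mpr hw0
  -- the range of g has dimension 1, hence its kernel has dimension 1
  have hrg : 0 < Module.finrank ℝ (LinearMap.range g) := by
    rw [Module.finrank_pos_iff]
    exact ⟨⟨⟨g ⟨w, hw⟩, LinearMap.mem_range_self g _⟩, 0, by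
      simp only [ne_eq, Submodule.mk_eq_zero]; exact hgne⟩⟩
  have hkerg : Module.finrank ℝ (LinearMap.ker g) ≤ 1 := by
    have := LinearMap.finrank_range_add_finrank_ker g
    rw [hW] at this
    omega
  -- the range of P is contained in the kernel of g
  have hPg : ∀ x : T, P x ∈ LinearMap.ker g := by
    intro x
    have h1 : g (P x) = ⟪w, (W.orthogonalProjection (x : E4) : E4)⟫ := rfl
    have h2 : ⟪(W.orthogonalProjection w : E4), (x : E4)⟫
        = ⟪w, (W.orthogonalProjection (x : E4) : E4)⟫ :=
      Submodule.inner_starProjection_left_eq_right W w (x : E4)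
    have h3 : (W.orthogonalProjection w : E4) = w := Submodule.starProjection_eq_self_iff.mpr hw
    rw [LinearMap.mem_ker, h1, ← h2, h3]
    exact horth _ x.2
  have hrangeP : LinearMap.range P ≤ LinearMap.ker g := by
    rintro y ⟨x, rfl⟩
    exact hPg x
  have hrkP : Module.finrank ℝ (LinearMap.range P) ≤ 1 :=
    le_trans (Submodule.finrank_mono hrangeP) hkerg
  have hkerP : 0 < Module.finrank ℝ (LinearMap.ker P) := by
    have := LinearMap.finrank_range_add_finrank_ker P
    rw [hT] at this
    omega
  -- extract a nonzero kernel vector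
  have : Nontrivial (LinearMap.ker P) := Module.nontrivial_of_finrank_pos hkerP
  obtain ⟨x, hxker, hx0⟩ := (Submodule.ne_bot_iff _).mp
    (Submodule.nontrivial_iff_ne_bot.mp this)
  have hx0' : (x : E4) ≠ 0 := fun h => hx0 (Subtype.ext h)
  have hproj : (W.orthogonalProjection ((x : T) : E4) : E4) = 0 := by
    have : P x = 0 := hxker
    have := congrArg (Subtype.val : W → E4) this
    simpa [hP] using this
  refine ⟨‖(x : E4)‖⁻¹ • (x : E4), T.smul_mem _ (x : T).2, norm_smul_inv_norm hx0', ?_⟩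
  rw [map_smul]
  simp [hproj]

set_option maxHeartbeats 1000000 in
/-- If `Σ` is a compact surface immersed in `ℝ⁴` via `φ` whose principal angles with
respect to a fixed plane `Pl` are constant, equal to `θ₁ ≤ θ₂` at every point, then
`θ₁ = 0` and `θ₂ = π/2`. -/
theorem compact_helix_surface_angles_eq_zero_pi_div_two
    {M : Type*} [TopologicalSpace M] [ChartedSpace (EuclideanSpace ℝ (Fin 2)) M]
    [IsManifold (𝓡 2) (⊤ : ℕ∞) M] [CompactSpace M] [Nonempty M]
    (φ : M → E4) (hφ : ContMDiff (𝓡 2) 𝓘(ℝ, E4) (⊤ : ℕ∞) φ)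
    (himm : ∀ p : M, Function.Injective (mfderiv (𝓡 2) 𝓘(ℝ, E4) φ p))
    (Pl : Submodule ℝ E4) (hPl : Module.finrank ℝ Pl = 2)
    (θ₁ θ₂ : ℝ)
    (hconst : ∀ p : M, IsPrincipalAngles
      (LinearMap.range (mfderiv (𝓡 2) 𝓘(ℝ, E4) φ p).toLinearMap) Pl θ₁ θ₂) :
    θ₁ = 0 ∧ θ₂ = π / 2 := by
  classical
  -- notation for tangent planes
  set T : M → Submodule ℝ E4 :=
    fun p => LinearMap.range (mfderiv (𝓡 2) 𝓘(ℝ, E4) φ p).toLinearMap with hTdef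
  have hTr : ∀ p, Module.finrank ℝ (T p) = 2 := by
    intro p
    have h : T p = LinearMap.range (mfderiv (𝓡 2) 𝓘(ℝ, E4) φ p).toLinearMap := rfl
    have hinj : Function.Injective ((mfderiv (𝓡 2) 𝓘(ℝ, E4) φ p).toLinearMap) := himm p
    rw [h]
    exact (LinearMap.finrank_range_of_inj hinj).trans finrank_euclideanSpace_fin
  -- for every direction w, there is a point where w is orthogonal to the tangent plane
  have key : ∀ w : E4, ∃ p : M, ∀ y ∈ T p, ⟪w, y⟫ = 0 := by
    intro w
    obtain ⟨p, -, hp⟩ := isCompact_univ.exists_isMaxOn Set.univ_nonempty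
      (((innerSL ℝ w).continuous.comp hφ.continuous).continuousOn)
    refine ⟨p, ?_⟩
    have hmax : IsLocalMax ((innerSL ℝ w) ∘ φ) p := hp.isLocalMax Filter.univ_mem
    have h0 := isLocalMax_mfderiv_eq_zero_aux ((innerSL ℝ w) ∘ φ) p hmax
    have hlin : MDifferentiableAt 𝓘(ℝ, E4) 𝓘(ℝ, ℝ) (innerSL ℝ w) (φ p) :=
      (innerSL ℝ w).differentiableAt.mdifferentiableAt
    have hcomp : mfderiv (𝓡 2) 𝓘(ℝ, ℝ) ((innerSL ℝ w) ∘ φ) p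
        = (mfderiv 𝓘(ℝ, E4) 𝓘(ℝ, ℝ) (innerSL ℝ w) (φ p)).comp
            (mfderiv (𝓡 2) 𝓘(ℝ, E4) φ p) :=
      mfderiv_comp p hlin ((hφ p).mdifferentiableAt (by simp))
    have hfd : mfderiv 𝓘(ℝ, E4) 𝓘(ℝ, ℝ) (innerSL ℝ w) (φ p) = innerSL ℝ w := by
      rw [mfderiv_eq_fderiv]
      exact ContinuousLinearMap.fderiv _
    rintro y ⟨x, rfl⟩
    have : ((innerSL ℝ w).comp (mfderiv (𝓡 2) 𝓘(ℝ, E4) φ p)) x = 0 := by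
      rw [← hfd]
      exact DFunLike.congr_fun (hcomp.symm.trans h0) x
    exact this
  -- dimension of the orthogonal complement of Pl
  have hE : Module.finrank ℝ E4 = 4 := finrank_euclideanSpace_fin
  have hPl' : Module.finrank ℝ Plᗮ = 2 := by
    have := Pl.finrank_add_finrank_orthogonal
    rw [hPl, hE] at this
    omega
  -- find nonzero vectors in Pl and in Plᗮ
  have hne : ∀ (W : Submodule ℝ E4), Module.finrank ℝ W = 2 → ∃ w ∈ W, w ≠ 0 := by
    intro W hWr
    rw [← Submodule.ne_bot_iff]
    intro hbot
    rw [hbot, finrank_bot] at hWr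
    omega
  -- Step 1 : θ₁ = 0
  obtain ⟨w₂, hw₂mem, hw₂0⟩ := hne Plᗮ hPl'
  obtain ⟨p₁, hp₁⟩ := key w₂
  obtain ⟨v, hvT, hv1, hvproj⟩ :=
    exists_unit_proj_zero_aux (T p₁) Plᗮ (hTr p₁) hPl' hw₂mem hw₂0 hp₁
  -- v belongs to Pl
  have hvPl : (Pl.orthogonalProjection v : E4) = v := by
    have h : (Pl.orthogonalProjection v : E4) + (Plᗮ.orthogonalProjection v : E4) = v :=
      Submodule.starProjection_add_starProjection_orthogonal (K := Pl) v
    rw [hvproj, add_zero] at h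
    exact h
  obtain ⟨hθ₁0, hθ12, hθ2, v₁, v₂, hv₁T, hv₂T, hn₁, hn₂, hortho, hform⟩ := hconst p₁
  have hpar := parseval_two_dim_aux (T p₁) (hTr p₁) hv₁T hv₂T hn₁ hn₂ hortho hvT
  have heq := hform v hvT
  rw [hvPl, hv1] at heq
  have hc₂0 : 0 ≤ Real.cos θ₂ := cos_nonneg_of_mem_Icc ⟨by linarith [pi_pos], hθ2⟩
  have hc₁0 : 0 ≤ Real.cos θ₁ :=
    cos_nonneg_of_mem_Icc ⟨by linarith [pi_pos], by linarith⟩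
  have hcle : Real.cos θ₂ ≤ Real.cos θ₁ :=
    Real.cos_le_cos_of_nonneg_of_le_pi hθ₁0 (by linarith [pi_pos]) hθ12
  have hc₁le1 : Real.cos θ₁ ≤ 1 := Real.cos_le_one θ₁
  have hv12 : ⟪v, v₁⟫ ^ 2 + ⟪v, v₂⟫ ^ 2 = 1 := by rw [hpar, hv1]; norm_num
  have hsq : Real.cos θ₂ ^ 2 ≤ Real.cos θ₁ ^ 2 := by nlinarith
  have hc₁sq : 1 ≤ Real.cos θ₁ ^ 2 := by
    have hmul : Real.cos θ₁ ^ 2 * (⟪v, v₁⟫ ^ 2 + ⟪v, v₂⟫ ^ 2) = Real.cos θ₁ ^ 2 := by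
      rw [hv12, mul_one]
    nlinarith [mul_le_mul_of_nonneg_right hsq (sq_nonneg (⟪v, v₂⟫ : ℝ))]
  have hge1 : 1 ≤ Real.cos θ₁ := by
    nlinarith [mul_le_mul_of_nonneg_left hc₁le1 hc₁0]
  have hcos1 : Real.cos θ₁ = 1 := le_antisymm hc₁le1 hge1
  have hθ₁ : θ₁ = 0 := by
    rw [← Real.cos_eq_one_iff_of_lt_of_lt (by nlinarith [pi_pos]) (by nlinarith [pi_pos])]
    exact hcos1
  refine ⟨hθ₁, ?_⟩
  -- Step 2 : θ₂ = π/2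
  obtain ⟨w₁, hw₁mem, hw₁0⟩ := hne Pl hPl
  obtain ⟨p₂, hp₂⟩ := key w₁
  obtain ⟨u, huT, hu1, huproj⟩ :=
    exists_unit_proj_zero_aux (T p₂) Pl (hTr p₂) hPl hw₁mem hw₁0 hp₂
  obtain ⟨-, -, -, u₁, u₂, hu₁T, hu₂T, hm₁, hm₂, horthu, hformu⟩ := hconst p₂
  have hparu := parseval_two_dim_aux (T p₂) (hTr p₂) hu₁T hu₂T hm₁ hm₂ horthu huT
  have hequ := hformu u huT
  rw [huproj] at hequ
  rw [hcos1] at hequ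
  simp only [norm_zero] at hequ
  have hu12 : ⟪u, u₁⟫ ^ 2 + ⟪u, u₂⟫ ^ 2 = 1 := by rw [hparu, hu1]; norm_num
  have ha0 : (⟪u, u₁⟫ : ℝ) ^ 2 = 0 := by
    nlinarith [sq_nonneg (Real.cos θ₂ * ⟪u, u₂⟫ : ℝ), sq_nonneg (⟪u, u₁⟫ : ℝ)]
  have hb1 : (⟪u, u₂⟫ : ℝ) ^ 2 = 1 := by linarith
  have hc2sq : Real.cos θ₂ ^ 2 = 0 := by nlinarith
  have hcos2 : Real.cos θ₂ = 0 := by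
    have := (pow_eq_zero_iff (n := 2) (by norm_num)).mp hc2sq
    exact this
  have : Real.cos θ₂ = Real.cos (π / 2) := by rw [Real.cos_pi_div_two]; exact hcos2
  exact Real.injOn_cos ⟨by linarith, by linarith [pi_pos]⟩
    ⟨by linarith [pi_pos], by linarith [pi_pos]⟩ this
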